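/- For every b ∈ ℚ₂, the integral ∫_{M₀} ψ(b·x₁x₂) d(μ×μ)(x₁,x₂) equals 1/2 if ‖b‖ ≤ 1, equals 0 if ‖b‖ = 2, and equals ‖b‖⁻¹ if ‖b‖ ≥ 4. (This is the formula for J₀(b) in the proof of Lemma 5.5.) -/

import Mathlib

open MeasureTheory

/-- `M_a = {(x₁,x₂) ∈ ℤ₂² : x₁ + x₂ ≡ a (mod 2)}` from the proof of Lemma 5.5. -/
def Mset (a : ℕ) : Set (ℚ_[2] × ℚ_[2]) :=
  {p | ‖p.1‖ ≤ 1 ∧ ‖p.2‖ ≤ 1 ∧ ‖p.1 + p.2 - (a : ℚ_[2])‖ ≤ 1 / 2}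

namespace Stmt11Aux

lemma norm_two : ‖(2:ℚ_[2])‖ = 2⁻¹ := by
  have := @Padic.norm_p 2 ⟨Nat.prime_two⟩
  push_cast at this
  convert this using 2

lemma norm_lt_one_le_half {x : ℚ_[2]} (h : ‖x‖ < 1) : ‖x‖ ≤ 2⁻¹ := by
  have h2 := (Padic.norm_le_pow_iff_norm_lt_pow_add_one x (-1))
  norm_num at h2
  linarith [h2.2 h]

lemma even_or_odd {x : ℚ_[2]} (h : ‖x‖ ≤ 1) : ‖x‖ ≤ 2⁻¹ ∨ ‖x - 1‖ ≤ 2⁻¹ := by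
  by_cases h1 : ‖x‖ < 1
  · exact Or.inl (norm_lt_one_le_half h1)
  · right
    have hx1 : ‖x‖ = 1 := le_antisymm h (not_lt.1 h1)
    set z : ℤ_[2] := ⟨x, h⟩ with hz
    have hzn : ‖z‖ = 1 := by rw [PadicInt.norm_def]; exact hx1
    have hu : IsUnit z := PadicInt.isUnit_iff.2 hzn
    have h0 : PadicInt.toZMod z ≠ 0 := by
      intro h0
      have hk : z ∈ RingHom.ker PadicInt.toZMod := h0
      rw [PadicInt.ker_toZMod] at hk
      exact (IsLocalRing.mem_maximalIdeal z).1 hk hu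
    have h1' : PadicInt.toZMod z = 1 := by
      have hz2 : ∀ a : ZMod 2, a = 0 ∨ a = 1 := by decide
      rcases hz2 (PadicInt.toZMod z) with h' | h'
      · exact absurd h' h0
      · exact h'
    have hk : (z - 1) ∈ RingHom.ker PadicInt.toZMod := by
      simp [RingHom.mem_ker, map_sub, h1']
    rw [PadicInt.ker_toZMod] at hk
    have hnu : ¬ IsUnit (z - 1) := (IsLocalRing.mem_maximalIdeal _).1 hk
    have hlt : ‖z - 1‖ < 1 :=
      lt_of_le_of_ne (PadicInt.norm_le_one _) (fun he => hnu (PadicInt.isUnit_iff.2 he))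
    have hlt2 : ‖((z - 1 : ℤ_[2]) : ℚ_[2])‖ < 1 := by rwa [PadicInt.padic_norm_e_of_padicInt]
    have he : ((z - 1 : ℤ_[2]) : ℚ_[2]) = x - 1 := by rw [PadicInt.coe_sub, PadicInt.coe_one]
    rw [he] at hlt2
    exact norm_lt_one_le_half hlt2

lemma nonarch (q r : ℚ_[2]) : ‖q + r‖ ≤ max ‖q‖ ‖r‖ := Padic.nonarchimedean q r

lemma norm_discrete_ge {c : ℚ_[2]} {n : ℤ} (h : ¬ ‖c‖ ≤ (2:ℝ)^n) : (2:ℝ)^(n+1) ≤ ‖c‖ := by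
  have h2 := (Padic.norm_le_pow_iff_norm_lt_pow_add_one c n)
  push_cast at h2
  exact le_of_not_gt (fun hlt => h (h2.2 hlt))

def Bb (n : ℕ) : Set ℚ_[2] := {x : ℚ_[2] | ‖x‖ ≤ (2:ℝ)⁻¹ ^ n}

lemma Bb_eq (n : ℕ) : Bb n = Metric.closedBall 0 ((2:ℝ)⁻¹ ^ n) := by
  ext x; simp [Bb, Metric.mem_closedBall, dist_zero_right]

lemma isCompact_Bb (n : ℕ) : IsCompact (Bb n) := by
  rw [Bb_eq]; exact isCompact_closedBall _ _

lemma isClosed_Bb (n : ℕ) : IsClosed (Bb n) := by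
  rw [Bb_eq]; exact Metric.isClosed_closedBall

lemma Bb_zero : Bb 0 = {x : ℚ_[2] | ‖x‖ ≤ 1} := by simp [Bb]

lemma Bb_mono {m n : ℕ} (h : m ≤ n) : Bb n ⊆ Bb m := fun x hx =>
  le_trans hx (pow_le_pow_of_le_one (by norm_num : (0:ℝ) ≤ 2⁻¹) (by norm_num) h)

lemma norm_two_pow (n : ℕ) : ‖(2:ℚ_[2])^n‖ = (2:ℝ)⁻¹ ^ n := by
  rw [norm_pow, norm_two]

lemma two_pow_ne_zero' (n : ℕ) : ((2:ℚ_[2])^n) ≠ 0 := pow_ne_zero n two_ne_zero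

lemma Bb_decomp (n : ℕ) : Bb n = Bb (n+1) ∪ ((fun x => x + 2^n) ⁻¹' Bb (n+1)) := by
  have hp := norm_two_pow n
  ext x
  constructor
  · intro hx
    have hy : ‖x / 2^n‖ ≤ 1 := by
      rw [norm_div, norm_two_pow, div_le_one (by positivity)]
      exact hx
    rcases even_or_odd hy with h | h
    · left
      show ‖x‖ ≤ (2:ℝ)⁻¹ ^ (n+1)
      have : ‖x‖ = ‖x / 2^n‖ * ((2:ℝ)⁻¹^n) := by
        rw [norm_div, norm_two_pow]
        field_simp
      rw [this, pow_succ, mul_comm ((2:ℝ)⁻¹^n)]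
      exact mul_le_mul_of_nonneg_right h (by positivity)
    · right
      show ‖x + 2^n‖ ≤ (2:ℝ)⁻¹ ^ (n+1)
      have hsub : ‖x - 2^n‖ ≤ (2:ℝ)⁻¹ ^ (n+1) := by
        have : x - 2^n = 2^n * (x / 2^n - 1) := by
          field_simp
        rw [this, norm_mul, norm_two_pow, pow_succ]
        exact mul_le_mul_of_nonneg_left h (by positivity)
      have h2 : ‖(2:ℚ_[2])^(n+1)‖ = (2:ℝ)⁻¹^(n+1) := norm_two_pow (n+1)
      have : x + 2^n = (x - 2^n) + 2^(n+1) := by ring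
      rw [this]
      refine le_trans (nonarch _ _) (max_le hsub (le_of_eq h2))
  · intro hx
    rcases hx with h | h
    · exact Bb_mono (Nat.le_succ n) h
    · have h' : ‖x + 2^n‖ ≤ (2:ℝ)⁻¹ ^ (n+1) := h
      have : x = (x + 2^n) + (-(2^n)) := by ring
      show ‖x‖ ≤ (2:ℝ)⁻¹ ^ n
      rw [this]
      refine le_trans (nonarch _ _) (max_le (le_trans h' ?_) ?_)
      · exact pow_le_pow_of_le_one (by norm_num : (0:ℝ) ≤ 2⁻¹) (by norm_num) (Nat.le_succ n)
      · rw [norm_neg, norm_two_pow]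

lemma Bb_disj (n : ℕ) : Disjoint (Bb (n+1)) ((fun x => x + 2^n) ⁻¹' Bb (n+1)) := by
  rw [Set.disjoint_left]
  intro x hx hx'
  have h1 : ‖x‖ ≤ (2:ℝ)⁻¹^(n+1) := hx
  have h2 : ‖x + 2^n‖ ≤ (2:ℝ)⁻¹^(n+1) := hx'
  have : ‖(2:ℚ_[2])^n‖ ≤ (2:ℝ)⁻¹^(n+1) := by
    have he : (2:ℚ_[2])^n = (x + 2^n) + (-x) := by ring
    rw [he]
    refine le_trans (nonarch _ _) (max_le h2 (by rwa [norm_neg]))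
  rw [norm_two_pow] at this
  have hlt : (2:ℝ)⁻¹^(n+1) < (2:ℝ)⁻¹^n := by
    apply pow_lt_pow_right_of_lt_one₀ (by norm_num) (by norm_num) (Nat.lt_succ_self n)
  linarith

section Meas
variable [MeasurableSpace ℚ_[2]] [BorelSpace ℚ_[2]]
variable (μ : Measure ℚ_[2]) [μ.IsAddHaarMeasure]

lemma measurableSet_Bb (n : ℕ) : MeasurableSet (Bb n) := (isClosed_Bb n).measurableSet

lemma meas_Bb (hμ : μ {x : ℚ_[2] | ‖x‖ ≤ 1} = 1) (n : ℕ) :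
    μ (Bb n) = ENNReal.ofReal ((2:ℝ)⁻¹ ^ n) := by
  induction n with
  | zero => simpa [Bb_zero] using hμ
  | succ n ih =>
    have hdec := Bb_decomp n
    have hpre : μ ((fun x => x + 2^n) ⁻¹' Bb (n+1)) = μ (Bb (n+1)) :=
      measure_preimage_add_right μ _ _
    have hmeas : MeasurableSet ((fun x => x + (2:ℚ_[2])^n) ⁻¹' Bb (n+1)) :=
      (measurableSet_Bb (n+1)).preimage (measurable_add_const _)
    have hU : μ (Bb n) = μ (Bb (n+1)) + μ (Bb (n+1)) := by
      rw [hdec, measure_union (Bb_disj n) hmeas, hpre]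
    rw [ih] at hU
    have hne : μ (Bb (n+1)) ≠ ⊤ := by
      intro h
      rw [h] at hU
      simp at hU
    have htr : (μ (Bb (n+1))).toReal + (μ (Bb (n+1))).toReal = (2:ℝ)⁻¹ ^ n := by
      have := congrArg ENNReal.toReal hU
      rw [ENNReal.toReal_ofReal (by positivity), ENNReal.toReal_add hne hne] at this
      linarith
    have : (μ (Bb (n+1))).toReal = (2:ℝ)⁻¹ ^ (n+1) := by
      rw [pow_succ]
      linarith
    rw [← ENNReal.ofReal_toReal hne, this]

lemma meas_Bb_ne_top (hμ : μ {x : ℚ_[2] | ‖x‖ ≤ 1} = 1) (n : ℕ) : μ (Bb n) ≠ ⊤ := by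
  rw [meas_Bb μ hμ n]; exact ENNReal.ofReal_ne_top

lemma meas_Bb_toReal (hμ : μ {x : ℚ_[2] | ‖x‖ ≤ 1} = 1) (n : ℕ) :
    (μ (Bb n)).toReal = (2:ℝ)⁻¹ ^ n := by
  rw [meas_Bb μ hμ n, ENNReal.toReal_ofReal (by positivity)]

lemma shift_int (f : ℚ_[2] → ℂ) {s : Set ℚ_[2]} (hs : MeasurableSet s) (a : ℚ_[2]) :
    ∫ y in s, f y ∂μ = ∫ y in (fun y => y + a) ⁻¹' s, f (y + a) ∂μ := by
  rw [← integral_indicator hs, ← integral_indicator (hs.preimage (measurable_add_const a))]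
  rw [← integral_add_right_eq_self (s.indicator f) a]
  congr 1

end Meas

section Char
variable [MeasurableSpace ℚ_[2]] [BorelSpace ℚ_[2]]
variable (μ : Measure ℚ_[2]) [μ.IsAddHaarMeasure]
variable (ψ : ℚ_[2] → ℂ)

lemma char_ball_triv (hμ : μ {x : ℚ_[2] | ‖x‖ ≤ 1} = 1)
    (hψtriv : ∀ x : ℚ_[2], ‖x‖ ≤ 1 → ψ x = 1)
    {c : ℚ_[2]} {n : ℕ} (hc : ‖c‖ ≤ (2:ℝ)^n) :
    ∫ x in Bb n, ψ (c * x) ∂μ = (((2:ℝ)⁻¹ ^ n : ℝ) : ℂ) := by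
  rw [setIntegral_congr_fun (measurableSet_Bb n) (g := fun _ => (1:ℂ))]
  · rw [setIntegral_const, measureReal_def, meas_Bb_toReal μ hμ n]
    simp
  · intro x hx
    apply hψtriv
    rw [norm_mul]
    calc ‖c‖ * ‖x‖ ≤ 2^n * (2⁻¹^n) :=
          mul_le_mul hc hx (norm_nonneg x) (by positivity)
    _ = 1 := by rw [← mul_pow]; norm_num

lemma char_ball_zero
    (hψadd : ∀ x y : ℚ_[2], ψ (x + y) = ψ x * ψ y)
    (hψhalf : ψ (2⁻¹ : ℚ_[2]) = -1)
    {c : ℚ_[2]} {n : ℕ} (hc : ¬ ‖c‖ ≤ (2:ℝ)^n) :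
    ∫ x in Bb n, ψ (c * x) ∂μ = 0 := by
  have hcz : c ≠ 0 := by
    intro h
    apply hc
    rw [h, norm_zero]
    positivity
  have hcge : (2:ℝ)^((n:ℤ)+1) ≤ ‖c‖ := by
    apply norm_discrete_ge
    rwa [zpow_natCast]
  have hcge' : (2:ℝ)^(n+1) ≤ ‖c‖ := by
    rw [← zpow_natCast]
    push_cast
    exact hcge
  set s : ℚ_[2] := (2*c)⁻¹ with hs
  have hcs : c * s = 2⁻¹ := by
    rw [hs]
    field_simp
  have hsn : ‖s‖ ≤ (2:ℝ)⁻¹ ^ n := by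
    rw [hs, norm_inv, norm_mul, norm_two]
    have h1 : (2:ℝ)^n ≤ 2⁻¹ * ‖c‖ := by
      rw [pow_succ] at hcge'
      linarith
    calc (2⁻¹ * ‖c‖)⁻¹ ≤ ((2:ℝ)^n)⁻¹ := inv_anti₀ (by positivity) h1
    _ = (2:ℝ)⁻¹^n := by rw [inv_pow]
  have hpre : (fun y => y + s) ⁻¹' Bb n = Bb n := by
    ext y
    constructor
    · intro hy
      have hy' : ‖y + s‖ ≤ (2:ℝ)⁻¹^n := hy
      have : y = (y + s) + (-s) := by ring
      show ‖y‖ ≤ (2:ℝ)⁻¹^n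
      rw [this]
      exact le_trans (nonarch _ _) (max_le hy' (by rwa [norm_neg]))
    · intro hy
      have hy' : ‖y‖ ≤ (2:ℝ)⁻¹^n := hy
      show ‖y + s‖ ≤ (2:ℝ)⁻¹^n
      exact le_trans (nonarch _ _) (max_le hy' hsn)
  have key : (∫ x in Bb n, ψ (c * x) ∂μ) = ∫ y in Bb n, ψ (c * (y + s)) ∂μ := by
    rw [shift_int μ (fun x => ψ (c*x)) (measurableSet_Bb n) s, hpre]
  have hpt : ∀ y : ℚ_[2], ψ (c * (y + s)) = -ψ (c * y) := by
    intro y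
    have he : c * (y + s) = c * y + c * s := by ring
    rw [he, hψadd, hcs, hψhalf]
    ring
  rw [funext fun y => hpt y] at key
  rw [integral_neg] at key
  have h2 := add_self_eq_zero (a := ∫ x in Bb n, ψ (c * x) ∂μ)
  apply h2.1
  linear_combination key

def Ob : Set ℚ_[2] := {x : ℚ_[2] | ‖x - 1‖ ≤ 2⁻¹}

lemma Ob_eq : Ob = Metric.closedBall 1 2⁻¹ := by
  ext x; simp [Ob, Metric.mem_closedBall, dist_eq_norm]

lemma isCompact_Ob : IsCompact Ob := by rw [Ob_eq]; exact isCompact_closedBall _ _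

lemma measurableSet_Ob : MeasurableSet Ob := by
  rw [Ob_eq]; exact Metric.isClosed_closedBall.measurableSet

lemma Ob_pre : (fun y : ℚ_[2] => y + 1) ⁻¹' Ob = Bb 1 := by
  ext y
  show ‖y + 1 - 1‖ ≤ 2⁻¹ ↔ ‖y‖ ≤ (2:ℝ)⁻¹^1
  rw [pow_one]
  constructor <;> intro h <;> simpa using h

lemma meas_Ob : μ Ob = μ (Bb 1) := by
  rw [← Ob_pre, measure_preimage_add_right]

lemma int_Ob (f : ℚ_[2] → ℂ) : ∫ y in Ob, f y ∂μ = ∫ y in Bb 1, f (y + 1) ∂μ := by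
  rw [shift_int μ f measurableSet_Ob 1, Ob_pre]

end Char
end Stmt11Aux

open Stmt11Aux in
/-- **Paper, proof of Lemma 5.5:** the formula for `J₀(b)`, i.e.
`∫_{M₀} ψ(b x₁ x₂) d(μ×μ)` equals `1/2` when `‖b‖ ≤ 1`, equals `0` when `‖b‖ = 2`,
and equals `‖b‖⁻¹` when `‖b‖ ≥ 4`. -/
theorem stmt11 [MeasurableSpace ℚ_[2]] [BorelSpace ℚ_[2]]
    (μ : Measure ℚ_[2]) [μ.IsAddHaarMeasure] [SigmaFinite μ]
    (hμ : μ {x : ℚ_[2] | ‖x‖ ≤ 1} = 1)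
    (ψ : ℚ_[2] → ℂ) (hψcont : Continuous ψ)
    (hψadd : ∀ x y : ℚ_[2], ψ (x + y) = ψ x * ψ y)
    (hψtriv : ∀ x : ℚ_[2], ‖x‖ ≤ 1 → ψ x = 1)
    (hψhalf : ψ (2⁻¹ : ℚ_[2]) = -1)
    (b : ℚ_[2]) :
    (‖b‖ ≤ 1 → (∫ p in Mset 0, ψ (b * p.1 * p.2) ∂(μ.prod μ)) = (1 / 2 : ℂ)) ∧
    (‖b‖ = 2 → (∫ p in Mset 0, ψ (b * p.1 * p.2) ∂(μ.prod μ)) = 0) ∧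
    (4 ≤ ‖b‖ → (∫ p in Mset 0, ψ (b * p.1 * p.2) ∂(μ.prod μ)) = ((‖b‖⁻¹ : ℝ) : ℂ)) := by
  classical
  have hE : ∀ x : ℚ_[2], x ∈ Bb 1 ↔ ‖x‖ ≤ 2⁻¹ := by
    intro x
    show ‖x‖ ≤ (2:ℝ)⁻¹^1 ↔ _
    rw [pow_one]
  have normOb : ∀ x ∈ Ob, ‖x‖ = 1 := by
    intro x hx
    have hx' : ‖x - 1‖ ≤ 2⁻¹ := hx
    have h1 : ‖x‖ ≤ 1 := by
      have he : x = (x - 1) + 1 := by ring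
      rw [he]
      refine le_trans (nonarch _ _) (max_le (le_trans hx' (by norm_num)) (by simp))
    have h2 : (1:ℝ) ≤ ‖x‖ := by
      have he : (1:ℚ_[2]) = x + (-(x - 1)) := by ring
      have hle : (1:ℝ) ≤ max ‖x‖ ‖-(x - 1)‖ := by
        calc (1:ℝ) = ‖(1:ℚ_[2])‖ := by simp
        _ = ‖x + (-(x - 1))‖ := by rw [← he]
        _ ≤ _ := nonarch _ _
      rcases le_max_iff.1 hle with h | h
      · exact h
      · rw [norm_neg] at h; linarith
    linarith
  have hMe : (μ (Bb 1)).toReal = 2⁻¹ := by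
    have := meas_Bb_toReal μ hμ 1
    simpa using this
  have hOe : (μ Ob).toReal = 2⁻¹ := by rw [meas_Ob]; exact hMe
  have hfc : Continuous (fun p : ℚ_[2] × ℚ_[2] => ψ (b * p.1 * p.2)) :=
    hψcont.comp ((continuous_const.mul continuous_fst).mul continuous_snd)
  have hIntE : IntegrableOn (fun p : ℚ_[2] × ℚ_[2] => ψ (b * p.1 * p.2))
      ((Bb 1) ×ˢ (Bb 1)) (μ.prod μ) :=
    hfc.continuousOn.integrableOn_compact ((isCompact_Bb 1).prod (isCompact_Bb 1))
  have hIntO : IntegrableOn (fun p : ℚ_[2] × ℚ_[2] => ψ (b * p.1 * p.2))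
      (Ob ×ˢ Ob) (μ.prod μ) :=
    hfc.continuousOn.integrableOn_compact (isCompact_Ob.prod isCompact_Ob)
  have hdisjEO : Disjoint (Bb 1) Ob := by
    rw [Set.disjoint_left]
    intro x hx hx'
    have h1 : ‖x‖ ≤ 2⁻¹ := (hE x).1 hx
    have h2 := normOb x hx'
    linarith
  have hdisj : Disjoint ((Bb 1) ×ˢ (Bb 1)) (Ob ×ˢ Ob) := by
    rw [Set.disjoint_left]
    rintro ⟨x, y⟩ ⟨hx, -⟩ ⟨hx', -⟩
    exact Set.disjoint_left.1 hdisjEO hx hx'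
  have hM : Mset 0 = ((Bb 1) ×ˢ (Bb 1)) ∪ (Ob ×ˢ Ob) := by
    ext ⟨x, y⟩
    simp only [Mset, Set.mem_setOf_eq, Nat.cast_zero, sub_zero, Set.mem_union, Set.mem_prod, hE]
    constructor
    · rintro ⟨hx, hy, hxy⟩
      have hxy' : ‖x + y‖ ≤ 2⁻¹ := by rw [show ((1:ℝ)/2) = 2⁻¹ by norm_num] at hxy; exact hxy
      rcases even_or_odd hx with h | h
      · left
        refine ⟨h, ?_⟩
        have he : y = (x + y) + (-x) := by ring
        rw [he]
        exact le_trans (nonarch _ _) (max_le hxy' (by rwa [norm_neg]))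
      · right
        refine ⟨h, ?_⟩
        have h2 : ‖(-2:ℚ_[2])‖ = 2⁻¹ := by rw [norm_neg]; exact norm_two
        have he : y - 1 = (x + y) + (-(x - 1)) + (-2) := by ring
        show ‖y - 1‖ ≤ 2⁻¹
        rw [he]
        refine le_trans (nonarch _ _) (max_le (le_trans (nonarch _ _)
          (max_le hxy' (by rwa [norm_neg]))) (le_of_eq h2))
    · have htwo : ‖(2:ℚ_[2])‖ = 2⁻¹ := norm_two
      rintro (⟨hx, hy⟩ | ⟨hx, hy⟩)
      · refine ⟨le_trans hx (by norm_num), le_trans hy (by norm_num), ?_⟩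
        refine le_trans (nonarch _ _) ?_
        rw [max_le_iff]
        constructor <;> [skip; skip] <;> linarith
      · have hx' : ‖x - 1‖ ≤ 2⁻¹ := hx
        have hy' : ‖y - 1‖ ≤ 2⁻¹ := hy
        have hxO : x ∈ Ob := hx
        have hyO : y ∈ Ob := hy
        refine ⟨le_of_eq (normOb x hxO), le_of_eq (normOb y hyO), ?_⟩
        have he : x + y = (x - 1) + (y - 1) + 2 := by ring
        rw [he]
        refine le_trans (nonarch _ _) ?_
        rw [max_le_iff]
        refine ⟨le_trans (nonarch _ _) ?_, by rw [htwo]; norm_num⟩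
        rw [max_le_iff]
        constructor <;> linarith
  have hsplit : (∫ p in Mset 0, ψ (b * p.1 * p.2) ∂(μ.prod μ)) =
      (∫ p in (Bb 1) ×ˢ (Bb 1), ψ (b * p.1 * p.2) ∂(μ.prod μ)) +
      (∫ p in Ob ×ˢ Ob, ψ (b * p.1 * p.2) ∂(μ.prod μ)) := by
    rw [hM]
    exact setIntegral_union hdisj (measurableSet_Ob.prod measurableSet_Ob) hIntE hIntO
  have hfubE : (∫ p in (Bb 1) ×ˢ (Bb 1), ψ (b * p.1 * p.2) ∂(μ.prod μ)) =
      ∫ x in Bb 1, (∫ y in Bb 1, ψ (b * x * y) ∂μ) ∂μ :=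
    setIntegral_prod _ hIntE
  have hfubO : (∫ p in Ob ×ˢ Ob, ψ (b * p.1 * p.2) ∂(μ.prod μ)) =
      ∫ x in Ob, (∫ y in Ob, ψ (b * x * y) ∂μ) ∂μ :=
    setIntegral_prod _ hIntO
  have hinnerO : ∀ x : ℚ_[2], (∫ y in Ob, ψ (b * x * y) ∂μ) =
      ψ (b * x) * ∫ y in Bb 1, ψ (b * x * y) ∂μ := by
    intro x
    rw [int_Ob]
    have he : (fun y : ℚ_[2] => ψ (b * x * (y + 1))) =
        fun y : ℚ_[2] => ψ (b * x) * ψ (b * x * y) := by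
      funext y
      rw [show b * x * (y + 1) = b * x + b * x * y by ring, hψadd]
    rw [he, integral_const_mul]
  refine ⟨?_, ?_, ?_⟩
  · -- case ‖b‖ ≤ 1
    intro hb
    rw [hsplit]
    have hone : ∀ u v : ℚ_[2], ‖u‖ ≤ 1 → ‖v‖ ≤ 1 → ψ (b * u * v) = 1 := by
      intro u v hu hv
      apply hψtriv
      rw [norm_mul, norm_mul]
      calc ‖b‖ * ‖u‖ * ‖v‖ ≤ 1 * 1 * 1 := by
            apply mul_le_mul _ hv (norm_nonneg v) (by norm_num)
            exact mul_le_mul hb hu (norm_nonneg u) (by norm_num)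
      _ = 1 := by norm_num
    have e1 : (∫ p in (Bb 1) ×ˢ (Bb 1), ψ (b * p.1 * p.2) ∂(μ.prod μ)) = ((4⁻¹:ℝ):ℂ) := by
      rw [setIntegral_congr_fun (((measurableSet_Bb 1)).prod (measurableSet_Bb 1))
        (g := fun _ => (1:ℂ)) ?_]
      · rw [setIntegral_const, measureReal_def, Measure.prod_prod, ENNReal.toReal_mul, hMe]
        norm_num
      · rintro ⟨x, y⟩ ⟨hx, hy⟩
        exact hone x y (le_trans ((hE x).1 hx) (by norm_num)) (le_trans ((hE y).1 hy) (by norm_num))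
    have e2 : (∫ p in Ob ×ˢ Ob, ψ (b * p.1 * p.2) ∂(μ.prod μ)) = ((4⁻¹:ℝ):ℂ) := by
      rw [setIntegral_congr_fun (measurableSet_Ob.prod measurableSet_Ob)
        (g := fun _ => (1:ℂ)) ?_]
      · rw [setIntegral_const, measureReal_def, Measure.prod_prod, ENNReal.toReal_mul, hOe]
        norm_num
      · rintro ⟨x, y⟩ ⟨hx, hy⟩
        exact hone x y (le_of_eq (normOb x hx)) (le_of_eq (normOb y hy))
    rw [e1, e2]
    norm_num
  · -- case ‖b‖ = 2
    intro hb
    rw [hsplit, hfubE, hfubO]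
    have hEE : (∫ x in Bb 1, (∫ y in Bb 1, ψ (b * x * y) ∂μ) ∂μ) = ((4⁻¹:ℝ):ℂ) := by
      rw [setIntegral_congr_fun (measurableSet_Bb 1)
        (g := fun _ => (((2:ℝ)⁻¹^1 : ℝ):ℂ)) ?_]
      · rw [setIntegral_const, measureReal_def, hMe]
        norm_num
      · intro x hx
        apply char_ball_triv μ ψ hμ hψtriv
        rw [norm_mul, hb]
        have := (hE x).1 hx
        rw [pow_one]
        nlinarith [norm_nonneg x]
    have hpsib : ψ b = -1 := by
      have h2b : ‖2 * b‖ = 1 := by rw [norm_mul, norm_two, hb]; norm_num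
      rcases even_or_odd (le_of_eq h2b) with h | h
      · rw [h2b] at h; norm_num at h
      · have hb1 : b = 2⁻¹ + 2⁻¹ * (2 * b - 1) := by field_simp; ring
        have hnorm : ‖(2:ℚ_[2])⁻¹ * (2 * b - 1)‖ ≤ 1 := by
          rw [norm_mul, norm_inv, norm_two]
          have : ‖(2:ℚ_[2]) * b - 1‖ ≤ 2⁻¹ := h
          rw [inv_inv]
          nlinarith [norm_nonneg ((2:ℚ_[2]) * b - 1)]
        rw [hb1, hψadd, hψhalf, hψtriv _ hnorm]
        ring
    have hOO : (∫ x in Ob, (∫ y in Ob, ψ (b * x * y) ∂μ) ∂μ) = -((4⁻¹:ℝ):ℂ) := by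
      rw [setIntegral_congr_fun measurableSet_Ob
        (g := fun _ => -((((2:ℝ)⁻¹^1 : ℝ):ℂ))) ?_]
      · rw [setIntegral_const, measureReal_def, hOe]
        norm_num
      · intro x hx
        show (∫ y in Ob, ψ (b * x * y) ∂μ) = _
        rw [hinnerO x]
        have hbx2 : ‖b * x‖ ≤ (2:ℝ)^1 := by
          rw [norm_mul, hb, normOb x hx, pow_one]
          norm_num
        rw [char_ball_triv μ ψ hμ hψtriv hbx2]
        have hpsibx : ψ (b * x) = -1 := by
          have he : b * x = b + b * (x - 1) := by ring
          have hn : ‖b * (x - 1)‖ ≤ 1 := by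
            rw [norm_mul, hb]
            have : ‖x - 1‖ ≤ 2⁻¹ := hx
            nlinarith [norm_nonneg (x - 1)]
          rw [he, hψadd, hpsib, hψtriv _ hn]
          ring
        rw [hpsibx]
        ring
    rw [hEE, hOO]
    ring
  · -- case 4 ≤ ‖b‖
    intro hb4
    have hbne : b ≠ 0 := by
      intro h
      rw [h, norm_zero] at hb4
      norm_num at hb4
    have hval : ‖b‖ = (2:ℝ)^(-b.valuation) := by
      have := Padic.norm_eq_zpow_neg_valuation hbne
      push_cast at this
      exact this
    have hvpos : 0 ≤ -b.valuation := by
      by_contra hcon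
      push_neg at hcon
      have : (2:ℝ)^(-b.valuation) ≤ 1 := by
        apply zpow_le_one_of_nonpos₀ (by norm_num)
        omega
      rw [hval] at hb4
      linarith
    set k : ℕ := (-b.valuation).toNat with hk
    have hkz : (k:ℤ) = -b.valuation := Int.toNat_of_nonneg hvpos
    have hbk : ‖b‖ = (2:ℝ)^k := by
      rw [hval, ← hkz, zpow_natCast]
    have hk2 : 2 ≤ k := by
      by_contra hcon
      push_neg at hcon
      rw [hbk] at hb4
      interval_cases k <;> norm_num at hb4
    have hOO : (∫ x in Ob, (∫ y in Ob, ψ (b * x * y) ∂μ) ∂μ) = 0 := by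
      rw [setIntegral_congr_fun measurableSet_Ob (g := fun _ => (0:ℂ)) ?_]
      · simp
      · intro x hx
        show (∫ y in Ob, ψ (b * x * y) ∂μ) = _
        rw [hinnerO x]
        have hbig : ¬ ‖b * x‖ ≤ (2:ℝ)^1 := by
          rw [norm_mul, normOb x hx, pow_one]
          push_neg
          nlinarith
        rw [char_ball_zero μ ψ hψadd hψhalf hbig]
        ring
    have hpk : ((2:ℝ)^(k-1)) ≠ 0 := by positivity
    have hk1 : (2:ℝ)^k = 2^(k-1) * 2 := by
      rw [← pow_succ]
      congr 1
      omega
    have hEE : (∫ x in Bb 1, (∫ y in Bb 1, ψ (b * x * y) ∂μ) ∂μ) =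
        (((2:ℝ)⁻¹^k : ℝ):ℂ) := by
      rw [setIntegral_congr_fun (measurableSet_Bb 1)
        (g := (Bb (k-1)).indicator fun _ => (((2:ℝ)⁻¹^1 : ℝ):ℂ)) ?_]
      · rw [setIntegral_indicator (measurableSet_Bb (k-1)),
          Set.inter_eq_self_of_subset_right (Bb_mono (by omega : 1 ≤ k - 1)),
          setIntegral_const, measureReal_def, meas_Bb_toReal μ hμ (k-1)]
        rw [show ((2:ℝ)⁻¹^(k-1)) • ((((2:ℝ)⁻¹^1:ℝ)):ℂ) = (((2:ℝ)⁻¹^(k-1) * (2:ℝ)⁻¹^1 : ℝ):ℂ) by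
          rw [Complex.real_smul]; push_cast; ring]
        congr 1
        push_cast
        rw [← pow_add]
        congr 1
        omega
      · intro x hx
        by_cases hxB : x ∈ Bb (k-1)
        · rw [Set.indicator_of_mem hxB]
          apply char_ball_triv μ ψ hμ hψtriv
          have hxn : ‖x‖ ≤ (2:ℝ)⁻¹^(k-1) := hxB
          rw [norm_mul, hbk, pow_one]
          rw [inv_pow] at hxn
          calc (2:ℝ)^k * ‖x‖ ≤ (2:ℝ)^k * ((2:ℝ)^(k-1))⁻¹ := by
                apply mul_le_mul_of_nonneg_left hxn (by positivity)
          _ = 2 := by rw [hk1]; field_simp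
        · rw [Set.indicator_of_notMem hxB]
          apply char_ball_zero μ ψ hψadd hψhalf
          have hxn : ¬ ‖x‖ ≤ (2:ℝ)⁻¹^(k-1) := hxB
          push_neg at hxn
          rw [norm_mul, hbk, pow_one]
          push_neg
          rw [inv_pow] at hxn
          calc (2:ℝ) = (2:ℝ)^k * ((2:ℝ)^(k-1))⁻¹ := by rw [hk1]; field_simp
          _ < (2:ℝ)^k * ‖x‖ := by
                apply mul_lt_mul_of_pos_left hxn (by positivity)
    rw [hsplit, hfubE, hfubO, hEE, hOO, add_zero, hbk]
    rw [← inv_pow]
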